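/- Let C = {M_1, M_2, M_3, M_4} be a chiral partition of H, and let Γ be the group {[A] ∈ G/{±I} : det A = 1}, where G = {A ∈ O(4,ℝ) : A·{-1,1}^4 = {-1,1}^4}. Then the homomorphism from Γ to the symmetric group on the four parts {M_1, M_2, M_3, M_4} given by the induced action on H is surjective: every permutation of the four matchings is induced by some element of Γ. In particular, Γ acts transitively on {M_1, M_2, M_3, M_4} and there exist elements of Γ inducing a 4-cycle and a 3-cycle on the matchings. -/

import Mathlib

open scoped Classical

noncomputable section

abbrev V4 := Fin 4 → ℝ

def cubeSet : Set V4 := {v | ∀ i, v i = 1 ∨ v i = -1}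

abbrev CubeV := {v : V4 // v ∈ cubeSet}

/-- `v` and `w` differ in exactly the coordinate `i`. -/
def diffExactly {n : ℕ} (v w : Fin n → ℝ) (i : Fin n) : Prop := ∀ j, v j ≠ w j ↔ j = i

/-- `v` and `w` differ in exactly one coordinate. -/
def diffOne {n : ℕ} (v w : Fin n → ℝ) : Prop := ∃ i, diffExactly v w i

instance antipodalSetoid : Setoid CubeV where
  r v w := (v : V4) = (w : V4) ∨ (v : V4) = -(w : V4)
  iseqv := by
    constructor
    · exact fun v => Or.inl rfl
    · rintro v w (h | h)
      · exact Or.inl h.symm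
      · right; rw [h, neg_neg]
    · rintro u v w (h1 | h1) (h2 | h2)
      · exact Or.inl (h1.trans h2)
      · exact Or.inr (h1.trans h2)
      · right; rw [h1, h2]
      · left; rw [h1, h2, neg_neg]

/-- vertices of the hemi-hypercube: antipodal pairs of vertices of the hypercube -/
def HVert := Quotient antipodalSetoid

/-- the hemi-hypercube graph -/
def H : SimpleGraph HVert where
  Adj x y := x ≠ y ∧ ∃ v w : CubeV, (⟦v⟧ : HVert) = x ∧ (⟦w⟧ : HVert) = y ∧
    diffOne (v : V4) (w : V4)
  symm := ⟨by
    rintro x y ⟨hxy, v, w, hv, hw, i, hi⟩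
    exact ⟨hxy.symm, w, v, hw, hv, i, fun j => by rw [← hi j]; exact ne_comm⟩⟩
  loopless := ⟨by rintro x ⟨h, -⟩; exact h rfl⟩

/-- the direction class `D i` -/
def D (i : Fin 4) : Set (Sym2 HVert) :=
  {e | e ∈ H.edgeSet ∧ ∃ v w : CubeV,
    e = s((⟦v⟧ : HVert), (⟦w⟧ : HVert)) ∧ diffExactly (v : V4) (w : V4) i}

/-- a set of edges of `G` is a perfect matching -/
def IsPM {V : Type*} (G : SimpleGraph V) (M : Set (Sym2 V)) : Prop :=
  M ⊆ G.edgeSet ∧ ∀ v : V, ∃! e : Sym2 V, e ∈ M ∧ v ∈ e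

/-- a chiral partition of `H`: a partition of the edge set of `H` into four perfect
matchings, each containing exactly one edge from each direction class. -/
def IsChiralPartition (M : Fin 4 → Set (Sym2 HVert)) : Prop :=
  (∀ k, IsPM H (M k)) ∧
  (∀ e ∈ H.edgeSet, ∃! k, e ∈ M k) ∧
  (∀ k i, ∃! e, e ∈ M k ∧ e ∈ D i)

/-- the subgroup of `O(4,ℝ)` of matrices mapping the hypercube vertex set `{-1,1}^4`
onto itself -/
def bigG : Subgroup (Matrix.orthogonalGroup (Fin 4) ℝ) where
  carrier := {A | Matrix.mulVec ((A : Matrix.orthogonalGroup (Fin 4) ℝ) :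
    Matrix (Fin 4) (Fin 4) ℝ) '' cubeSet = cubeSet}
  one_mem' := by
    show Matrix.mulVec ((1 : Matrix.orthogonalGroup (Fin 4) ℝ) : Matrix (Fin 4) (Fin 4) ℝ)
        '' cubeSet = cubeSet
    rw [Matrix.UnitaryGroup.one_val]
    ext v
    constructor
    · rintro ⟨w, hw, rfl⟩; rwa [Matrix.one_mulVec]
    · intro hv; exact ⟨v, hv, Matrix.one_mulVec v⟩
  mul_mem' := by
    intro A B hA hB
    show Matrix.mulVec ((A * B : Matrix.orthogonalGroup (Fin 4) ℝ) : Matrix (Fin 4) (Fin 4) ℝ)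
        '' cubeSet = cubeSet
    rw [Matrix.UnitaryGroup.mul_val]
    have hfun : (fun v : V4 => Matrix.mulVec (A : Matrix (Fin 4) (Fin 4) ℝ)
        (Matrix.mulVec (B : Matrix (Fin 4) (Fin 4) ℝ) v))
        = Matrix.mulVec ((A : Matrix (Fin 4) (Fin 4) ℝ) * (B : Matrix (Fin 4) (Fin 4) ℝ)) :=
      funext fun v => Matrix.mulVec_mulVec v _ _
    calc Matrix.mulVec ((A : Matrix (Fin 4) (Fin 4) ℝ) * (B : Matrix (Fin 4) (Fin 4) ℝ)) '' cubeSet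
        = (fun v : V4 => Matrix.mulVec (A : Matrix (Fin 4) (Fin 4) ℝ)
            (Matrix.mulVec (B : Matrix (Fin 4) (Fin 4) ℝ) v)) '' cubeSet := by rw [hfun]
      _ = Matrix.mulVec (A : Matrix (Fin 4) (Fin 4) ℝ)
            '' (Matrix.mulVec (B : Matrix (Fin 4) (Fin 4) ℝ) '' cubeSet) :=
          (Set.image_image _ _ _).symm
      _ = Matrix.mulVec (A : Matrix (Fin 4) (Fin 4) ℝ) '' cubeSet := by rw [hB]
      _ = cubeSet := hA
  inv_mem' := by
    intro A hA
    show Matrix.mulVec ((A⁻¹ : Matrix.orthogonalGroup (Fin 4) ℝ) : Matrix (Fin 4) (Fin 4) ℝ)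
        '' cubeSet = cubeSet
    conv_lhs => rw [← hA]
    rw [Set.image_image]
    have hfun : (fun v : V4 => Matrix.mulVec ((A⁻¹ : Matrix.orthogonalGroup (Fin 4) ℝ) :
        Matrix (Fin 4) (Fin 4) ℝ) (Matrix.mulVec (A : Matrix (Fin 4) (Fin 4) ℝ) v)) = id := by
      funext v
      show Matrix.mulVec _ (Matrix.mulVec _ v) = v
      rw [Matrix.mulVec_mulVec]
      have h1 : ((A⁻¹ : Matrix.orthogonalGroup (Fin 4) ℝ) : Matrix (Fin 4) (Fin 4) ℝ)
          * (A : Matrix (Fin 4) (Fin 4) ℝ) = 1 := by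
        rw [Matrix.UnitaryGroup.inv_val]
        exact A.2.1
      rw [h1, Matrix.one_mulVec]
    rw [hfun, Set.image_id]

lemma negOne_mem_orth : (-1 : Matrix (Fin 4) (Fin 4) ℝ) ∈ Matrix.orthogonalGroup (Fin 4) ℝ := by
  rw [Matrix.mem_orthogonalGroup_iff]
  simp

lemma negG_mem : (⟨-1, negOne_mem_orth⟩ : Matrix.orthogonalGroup (Fin 4) ℝ) ∈ bigG := by
  show Matrix.mulVec (-1 : Matrix (Fin 4) (Fin 4) ℝ) '' cubeSet = cubeSet
  have h : Matrix.mulVec (-1 : Matrix (Fin 4) (Fin 4) ℝ) = fun v : V4 => -v := by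
    funext v
    rw [Matrix.neg_mulVec, Matrix.one_mulVec]
  rw [h]
  ext v
  constructor
  · rintro ⟨w, hw, rfl⟩ i
    rcases hw i with h' | h' <;> simp [h']
  · intro hv
    exact ⟨-v, fun i => by rcases hv i with h' | h' <;> simp [h'], by simp⟩

/-- the element `-I` of `G` -/
def negG : bigG := ⟨⟨-1, negOne_mem_orth⟩, negG_mem⟩

instance zpowersNegGNormal : (Subgroup.zpowers negG).Normal := by
  have hc : ∀ g : bigG, Commute negG g := by
    intro g
    have h1 : (negG : Matrix.orthogonalGroup (Fin 4) ℝ) * (g : Matrix.orthogonalGroup (Fin 4) ℝ)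
        = (g : Matrix.orthogonalGroup (Fin 4) ℝ) * (negG : Matrix.orthogonalGroup (Fin 4) ℝ) := by
      apply Subtype.ext
      show (-1 : Matrix (Fin 4) (Fin 4) ℝ) * _ = _ * (-1 : Matrix (Fin 4) (Fin 4) ℝ)
      rw [neg_one_mul, mul_neg_one]
    exact Subtype.ext h1
  constructor
  intro x hx g
  rcases Subgroup.mem_zpowers_iff.mp hx with ⟨k, rfl⟩
  have h2 : Commute (negG ^ k) g := (hc g).zpow_left k
  have h3 : g * negG ^ k * g⁻¹ = negG ^ k := by
    calc g * negG ^ k * g⁻¹ = negG ^ k * g * g⁻¹ := by rw [← h2.eq]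
      _ = negG ^ k := mul_inv_cancel_right _ _
  rw [h3]
  exact hx

/-- the quotient group `G/{±I}` -/
abbrev QG := bigG ⧸ Subgroup.zpowers negG

/-- the matrix underlying an element of `G` -/
def matOf (A : bigG) : Matrix (Fin 4) (Fin 4) ℝ :=
  ((A : Matrix.orthogonalGroup (Fin 4) ℝ) : Matrix (Fin 4) (Fin 4) ℝ)

/-- `f : G/{±I} → Aut H` is the natural action of `G/{±I}` on the vertices of `H`,
i.e. the class of `A` sends the antipodal pair of `v` to the antipodal pair of `A·v`. -/
def IsNaturalAction (f : QG →* (H ≃g H)) : Prop :=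
  ∀ (A : bigG) (v : CubeV), ∃ w : CubeV,
    (w : V4) = Matrix.mulVec (matOf A) (v : V4) ∧
    (f (QuotientGroup.mk A)) (⟦v⟧ : HVert) = (⟦w⟧ : HVert)

/-- the determinant condition `det A = 1`, well defined on classes in `G/{±I}` -/
def DetOne (x : QG) : Prop :=
  ∀ A : bigG, (QuotientGroup.mk A : QG) = x → (matOf A).det = 1

namespace Stmt18


abbrev BV := Fin 4 → Bool

def flipB (i : Fin 4) (b : BV) : BV := fun j => if j = i then !(b j) else b j
def bnotB (b : BV) : BV := fun j => !(b j)
def pB (b : BV) : Bool := (b 0).xor ((b 1).xor ((b 2).xor (b 3)))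
def eclsB (b : BV) : Fin 4 :=
  if ((b 0).xor (b 1)) then (if ((b 0).xor (b 2)) then 3 else 2)
  else (if ((b 0).xor (b 2)) then 1 else 0)
def oclsB (b : BV) : Fin 4 :=
  if ((b 0).xor (b 1)) then (if ((b 0).xor (b 2)) then 0 else 1)
  else (if ((b 0).xor (b 2)) then 2 else 3)
def evB : Fin 4 → BV := ![![false,false,false,false], ![false,false,true,true],
  ![false,true,false,true], ![false,true,true,false]]
def ebB (b : BV) (i : Fin 4) : BV := if pB b then flipB i b else b
def eclB (b : BV) (i : Fin 4) : Fin 4 := eclsB (ebB b i)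
def oTB (u i : Fin 4) : Fin 4 := oclsB (flipB i (evB u))
def xf (a b : Fin 4) : Fin 4 := Fin.mk ((a.val ^^^ b.val) % 4) (Nat.mod_lt _ (by norm_num))
def rho (L : Bool) (u : Fin 4) : Fin 4 :=
  if L then (if u = 0 then 0 else if u = 1 then 3 else if u = 2 then 1 else 2)
  else (if u = 0 then 0 else if u = 1 then 2 else if u = 2 then 3 else 1)
def qcB (L : Bool) (c u : Fin 4) : Fin 4 := xf c (rho L u)
def swapF (c c' k : Fin 4) : Fin 4 := if k = c then c' else if k = c' then c else k
def actBB (p : Equiv.Perm (Fin 4)) (ε : Fin 4 → Bool) (b : BV) : BV :=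
  fun i => (ε i).xor (b (p i))

-- decide lemmas
lemma dec_flip_ne (b : BV) (i : Fin 4) : b ≠ flipB i b ∧ b ≠ bnotB (flipB i b) := by
  revert b i; decide
lemma dec_flip_inj (b : BV) (i i' : Fin 4) : flipB i b = flipB i' b → i = i' := by
  revert b i i'; decide
lemma dec_flip_ne_bnot (b : BV) (i i' : Fin 4) : flipB i b ≠ bnotB (flipB i' b) := by
  revert b i i'; decide
lemma dec_pb_bnot (b : BV) : pB (bnotB b) = pB b := by revert b; decide
lemma dec_pb_flip (b : BV) (i : Fin 4) : pB (flipB i b) = !(pB b) := by revert b i; decide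
lemma dec_flip_bnot (b : BV) (i : Fin 4) : flipB i (bnotB b) = bnotB (flipB i b) := by
  revert b i; decide
lemma dec_flip_flip (b : BV) (i : Fin 4) : flipB i (flipB i b) = b := by revert b i; decide
lemma dec_eb (b : BV) (i : Fin 4) :
    ebB b i = evB (eclB b i) ∨ ebB b i = bnotB (evB (eclB b i)) := by revert b i; decide
lemma dec_pb_ev (u : Fin 4) : pB (evB u) = false := by revert u; decide
lemma dec_ev_inj (u u' : Fin 4) : evB u = evB u' → u = u' := by revert u u'; decide
lemma dec_ev_ne_bnot (u u' : Fin 4) : evB u ≠ bnotB (evB u') := by revert u u'; decide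
lemma dec_ecls_ev (u : Fin 4) : eclsB (evB u) = u := by revert u; decide
lemma dec_ocl (b b' : BV) (hb : pB b = true) (hb' : pB b' = true) :
    oclsB b = oclsB b' ↔ (b' = b ∨ b' = bnotB b) := by revert b b' ; decide

lemma dec_bnot_bnot (b : BV) : bnotB (bnotB b) = b := by revert b; decide
lemma dec_flip_ne' (b : BV) (i : Fin 4) : flipB i b ≠ b ∧ flipB i b ≠ bnotB b := by
  revert b i; decide

def toC (b : BV) : CubeV :=
  ⟨fun i => if b i then 1 else -1, fun i => by by_cases h : b i <;> simp [h]⟩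

lemma toC_inj : Function.Injective toC := by
  intro b b' h
  funext j
  have := congrFun (congrArg (fun v : CubeV => (v : V4)) h) j
  by_cases hb : b j <;> by_cases hb' : b' j <;> simp [toC, hb, hb'] at this ⊢ <;> norm_num at this

lemma toC_surj : ∀ v : CubeV, ∃ b : BV, toC b = v := by
  intro v
  refine ⟨fun i => if (v : V4) i = 1 then true else false, ?_⟩
  apply Subtype.ext
  funext i
  rcases v.2 i with h | h <;> simp [toC, h] <;> norm_num

lemma toC_bnot (b : BV) : (toC (bnotB b) : V4) = -(toC b : V4) := by
  funext i
  by_cases h : b i <;> simp [toC, bnotB, h]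

def vB (b : BV) : HVert := ⟦toC b⟧

lemma vB_eq_iff (b b' : BV) : vB b = vB b' ↔ (b' = b ∨ b' = bnotB b) := by
  constructor
  · intro h
    rcases Quotient.exact h with h | h
    · left; exact (toC_inj (Subtype.ext h)).symm
    · right
      apply toC_inj
      apply Subtype.ext
      rw [toC_bnot, h, neg_neg]
  · rintro (rfl | rfl)
    · rfl
    · exact Quotient.sound (Or.inr (by rw [toC_bnot, neg_neg]))

lemma vB_bnot (b : BV) : vB (bnotB b) = vB b := by
  rw [vB_eq_iff]; right; exact (dec_bnot_bnot b).symm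

lemma vB_pb (b b' : BV) (h : vB b = vB b') : pB b = pB b' := by
  rcases (vB_eq_iff b b').mp h with rfl | rfl
  · rfl
  · exact (dec_pb_bnot b).symm

lemma diffExactly_toC (b b' : BV) (i : Fin 4) :
    diffExactly (toC b : V4) (toC b' : V4) i ↔ ∀ j, (b j ≠ b' j ↔ j = i) := by
  have key : ∀ j, ((toC b : V4) j ≠ (toC b' : V4) j ↔ b j ≠ b' j) := by
    intro j
    by_cases hb : b j <;> by_cases hb' : b' j <;> simp [toC, hb, hb'] <;> norm_num
  constructor
  · intro h j; rw [← key j]; exact h j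
  · intro h j; rw [key j]; exact h j

lemma diffExactly_flip (b : BV) (i : Fin 4) :
    diffExactly (toC b : V4) (toC (flipB i b) : V4) i := by
  rw [diffExactly_toC]
  intro j
  constructor
  · intro h
    by_contra hj
    exact h (by simp [flipB, hj])
  · rintro rfl
    simp [flipB]

def edgB (b : BV) (i : Fin 4) : Sym2 HVert := s(vB b, vB (flipB i b))

lemma edg_adj (b : BV) (i : Fin 4) : H.Adj (vB b) (vB (flipB i b)) := by
  refine ⟨?_, toC b, toC (flipB i b), rfl, rfl, i, diffExactly_flip b i⟩
  rw [Ne, vB_eq_iff]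
  push_neg
  exact dec_flip_ne' b i

lemma edg_mem_edgeSet (b : BV) (i : Fin 4) : edgB b i ∈ H.edgeSet := edg_adj b i

lemma edg_mem_D (b : BV) (i : Fin 4) : edgB b i ∈ D i :=
  ⟨edg_mem_edgeSet b i, toC b, toC (flipB i b), rfl, diffExactly_flip b i⟩

lemma edg_flip (b : BV) (i : Fin 4) : edgB (flipB i b) i = edgB b i := by
  unfold edgB
  rw [dec_flip_flip, Sym2.eq_swap]

lemma edg_bnot (b : BV) (i : Fin 4) : edgB (bnotB b) i = edgB b i := by
  unfold edgB
  rw [dec_flip_bnot, vB_bnot, vB_bnot]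

lemma edg_eb (b : BV) (i : Fin 4) : edgB (ebB b i) i = edgB b i := by
  unfold ebB
  by_cases h : pB b <;> simp [h, edg_flip]

lemma edg_ev_ecl (b : BV) (i : Fin 4) : edgB (evB (eclB b i)) i = edgB b i := by
  rcases dec_eb b i with h | h
  · rw [← h, edg_eb]
  · have : edgB (ebB b i) i = edgB (evB (eclB b i)) i := by rw [h, edg_bnot]
    rw [← this, edg_eb]

lemma edg_surj (e : Sym2 HVert) (he : e ∈ H.edgeSet) : ∃ b i, e = edgB b i := by
  induction e using Sym2.ind with
  | _ x y =>
    rw [SimpleGraph.mem_edgeSet] at he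
    obtain ⟨hne, v, w, hv, hw, i, hd⟩ := he
    obtain ⟨b, rfl⟩ := toC_surj v
    obtain ⟨b', rfl⟩ := toC_surj w
    have hb' : b' = flipB i b := by
      rw [diffExactly_toC] at hd
      funext j
      by_cases hj : j = i
      · subst hj
        have := (hd j).mpr rfl
        simp [flipB]
        by_cases h1 : b j <;> by_cases h2 : b' j <;> simp [h1, h2] at this ⊢
      · have : ¬ (b j ≠ b' j) := fun hne2 => hj ((hd j).mp hne2)
        push_neg at this
        simp [flipB, hj, this]
    refine ⟨b, i, ?_⟩
    rw [← hv, ← hw, hb']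
    rfl

lemma edg_inj_i (b : BV) (i i' : Fin 4) (h : edgB b i = edgB b i') : i = i' := by
  unfold edgB at h
  rw [Sym2.eq_iff] at h
  rcases h with ⟨-, h2⟩ | ⟨h1, -⟩
  · rcases (vB_eq_iff (flipB i b) (flipB i' b)).mp h2 with h | h
    · exact (dec_flip_inj b i' i h).symm
    · exact absurd h (dec_flip_ne_bnot b i' i)
  · have := vB_pb _ _ h1
    rw [dec_pb_flip] at this
    cases pB b <;> simp at this

lemma mem_bigG_iff (A : bigG) :
    Matrix.mulVec (matOf A) '' cubeSet = cubeSet := A.2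

lemma cube_mem_map (A : bigG) (v : CubeV) : Matrix.mulVec (matOf A) (v : V4) ∈ cubeSet := by
  have h : Matrix.mulVec (matOf A) (v : V4) ∈ Matrix.mulVec (matOf A) '' cubeSet :=
    ⟨(v : V4), v.2, rfl⟩
  rwa [mem_bigG_iff A] at h

def cmap (A : bigG) (v : CubeV) : CubeV := ⟨Matrix.mulVec (matOf A) (v : V4), cube_mem_map A v⟩

lemma matOf_mul (A B : bigG) : matOf (A * B) = matOf A * matOf B := rfl
lemma matOf_one : matOf (1 : bigG) = 1 := rfl

lemma cmap_neg (A : bigG) (v : V4) :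
    Matrix.mulVec (matOf A) (-v) = -(Matrix.mulVec (matOf A) v) := by
  have h := map_neg ((matOf A).mulVecLin) v
  simpa using h

def hmap (A : bigG) : HVert → HVert :=
  Quotient.map (cmap A) (by
    rintro v w (h | h)
    · left
      show Matrix.mulVec (matOf A) (v : V4) = Matrix.mulVec (matOf A) (w : V4)
      rw [h]
    · right
      show Matrix.mulVec (matOf A) (v : V4) = -(Matrix.mulVec (matOf A) (w : V4))
      rw [h, cmap_neg])

lemma hmap_mk (A : bigG) (v : CubeV) : hmap A (⟦v⟧ : HVert) = ⟦cmap A v⟧ := rfl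

lemma hmap_mul (A B : bigG) (x : HVert) : hmap (A * B) x = hmap A (hmap B x) := by
  induction x using Quotient.ind with
  | _ v =>
    rw [hmap_mk, hmap_mk, hmap_mk]
    congr 1
    apply Subtype.ext
    show Matrix.mulVec (matOf (A * B)) _ = Matrix.mulVec (matOf A) (Matrix.mulVec (matOf B) _)
    rw [matOf_mul, ← Matrix.mulVec_mulVec]

lemma hmap_one (x : HVert) : hmap 1 x = x := by
  induction x using Quotient.ind with
  | _ v =>
    rw [hmap_mk]
    congr 1
    apply Subtype.ext
    show Matrix.mulVec (matOf 1) _ = _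
    rw [matOf_one, Matrix.one_mulVec]

lemma hmap_inv_comp (A : bigG) (x : HVert) : hmap A⁻¹ (hmap A x) = x := by
  rw [← hmap_mul, inv_mul_cancel, hmap_one]

lemma hmap_comp_inv (A : bigG) (x : HVert) : hmap A (hmap A⁻¹ x) = x := by
  rw [← hmap_mul, mul_inv_cancel, hmap_one]

lemma transpose_matOf_mul (A : bigG) : (matOf A).transpose * matOf A = 1 := by
  have h := (A : Matrix.orthogonalGroup (Fin 4) ℝ).2.1
  have hs : star (matOf A) = (matOf A).transpose := by
    rw [Matrix.star_eq_conjTranspose]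
    apply Matrix.ext
    intro i j
    simp [Matrix.conjTranspose_apply]
  rw [← hs]
  exact h

lemma dot_pres (A : bigG) (x : V4) :
    dotProduct (Matrix.mulVec (matOf A) x) (Matrix.mulVec (matOf A) x)
      = dotProduct x x := by
  rw [Matrix.dotProduct_mulVec, ← Matrix.mulVec_transpose, Matrix.mulVec_mulVec,
    transpose_matOf_mul, Matrix.one_mulVec]

lemma diffOne_iff_dot (v w : CubeV) :
    diffOne (v : V4) (w : V4) ↔
      dotProduct ((v : V4) - (w : V4)) ((v : V4) - (w : V4)) = 4 := by
  classical
  set s : Finset (Fin 4) := Finset.univ.filter (fun j => (v : V4) j ≠ (w : V4) j) with hs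
  have hterm : ∀ j, ((v : V4) j - (w : V4) j) * ((v : V4) j - (w : V4) j)
      = if (v : V4) j = (w : V4) j then 0 else 4 := by
    intro j
    rcases v.2 j with h1 | h1 <;> rcases w.2 j with h2 | h2 <;> rw [h1, h2] <;> norm_num
  have hdot : dotProduct ((v : V4) - (w : V4)) ((v : V4) - (w : V4))
      = 4 * (s.card : ℝ) := by
    unfold dotProduct
    calc ∑ j, ((v : V4) - (w : V4)) j * ((v : V4) - (w : V4)) j
        = ∑ j, (if (v : V4) j = (w : V4) j then (0:ℝ) else 4) := by
          apply Finset.sum_congr rfl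
          intro j _
          simp only [Pi.sub_apply]
          exact hterm j
      _ = ∑ j ∈ s, (4:ℝ) := by
          rw [hs, Finset.sum_filter]
          apply Finset.sum_congr rfl
          intro j _
          by_cases h : (v : V4) j = (w : V4) j <;> simp [h]
      _ = (s.card : ℝ) * 4 := by rw [Finset.sum_const, nsmul_eq_mul]
      _ = 4 * (s.card : ℝ) := by ring
  rw [hdot]
  constructor
  · rintro ⟨i, hi⟩
    have : s = {i} := by
      apply Finset.eq_singleton_iff_unique_mem.mpr
      constructor
      · rw [hs, Finset.mem_filter]
        exact ⟨Finset.mem_univ i, (hi i).mpr rfl⟩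
      · intro j hj
        rw [hs, Finset.mem_filter] at hj
        exact (hi j).mp hj.2
    rw [this]
    norm_num
  · intro h
    have hc : (s.card : ℝ) = 1 := by linarith
    have hc' : s.card = 1 := by exact_mod_cast hc
    obtain ⟨i, hi⟩ := Finset.card_eq_one.mp hc'
    refine ⟨i, fun j => ?_⟩
    constructor
    · intro hne
      have : j ∈ s := by rw [hs, Finset.mem_filter]; exact ⟨Finset.mem_univ j, hne⟩
      rw [hi] at this
      exact Finset.mem_singleton.mp this
    · rintro rfl
      have : j ∈ s := by rw [hi]; exact Finset.mem_singleton_self j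
      rw [hs, Finset.mem_filter] at this
      exact this.2

lemma cmap_diffOne (A : bigG) (v w : CubeV) (h : diffOne (v : V4) (w : V4)) :
    diffOne (cmap A v : V4) (cmap A w : V4) := by
  rw [diffOne_iff_dot] at h ⊢
  show dotProduct (Matrix.mulVec (matOf A) (v:V4) - Matrix.mulVec (matOf A) (w:V4))
    (Matrix.mulVec (matOf A) (v:V4) - Matrix.mulVec (matOf A) (w:V4)) = 4
  have hsub : Matrix.mulVec (matOf A) (v:V4) - Matrix.mulVec (matOf A) (w:V4)
      = Matrix.mulVec (matOf A) ((v:V4) - (w:V4)) := by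
    have := map_sub ((matOf A).mulVecLin) (v : V4) (w : V4)
    simpa using this.symm
  rw [hsub, dot_pres]
  exact h

lemma hmap_adj (A : bigG) (x y : HVert) (h : H.Adj x y) : H.Adj (hmap A x) (hmap A y) := by
  obtain ⟨hne, v, w, hv, hw, hd⟩ := h
  subst hv; subst hw
  refine ⟨?_, cmap A v, cmap A w, rfl, rfl, cmap_diffOne A v w hd⟩
  intro hc
  apply hne
  have := congrArg (hmap A⁻¹) hc
  exact (hmap_inv_comp A _).symm.trans (this.trans (hmap_inv_comp A _))

def giso (A : bigG) : H ≃g H where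
  toFun := hmap A
  invFun := hmap A⁻¹
  left_inv := hmap_inv_comp A
  right_inv := hmap_comp_inv A
  map_rel_iff' := by
    intro x y
    show H.Adj (hmap A x) (hmap A y) ↔ H.Adj x y
    constructor
    · intro h
      have h2 := hmap_adj A⁻¹ _ _ h
      rwa [hmap_inv_comp, hmap_inv_comp] at h2
    · exact hmap_adj A x y

lemma giso_apply (A : bigG) (x : HVert) : giso A x = hmap A x := rfl

def f0 : bigG →* (H ≃g H) where
  toFun := giso
  map_one' := by
    apply RelIso.ext
    intro x
    exact hmap_one x
  map_mul' := by
    intro A B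
    apply RelIso.ext
    intro x
    exact hmap_mul A B x

lemma f0_ker : Subgroup.zpowers negG ≤ f0.ker := by
  rw [Subgroup.zpowers_le]
  rw [MonoidHom.mem_ker]
  apply RelIso.ext
  intro x
  induction x using Quotient.ind with
  | _ v =>
    show hmap negG (⟦v⟧ : HVert) = (⟦v⟧ : HVert)
    rw [hmap_mk]
    apply Quotient.sound
    right
    show Matrix.mulVec (matOf negG) _ = _
    have : matOf negG = -1 := rfl
    rw [this, Matrix.neg_mulVec, Matrix.one_mulVec]

def fQG : QG →* (H ≃g H) := QuotientGroup.lift _ f0 f0_ker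

lemma fQG_mk (A : bigG) : fQG (QuotientGroup.mk A) = giso A :=
  QuotientGroup.lift_mk _ _ _

lemma fQG_natural : IsNaturalAction fQG := by
  intro A v
  exact ⟨cmap A v, rfl, by rw [fQG_mk]; rfl⟩


def dB (ε : Fin 4 → Bool) (i : Fin 4) : ℝ := if ε i then -1 else 1

def spMat (p : Equiv.Perm (Fin 4)) (ε : Fin 4 → Bool) : Matrix (Fin 4) (Fin 4) ℝ :=
  Matrix.of fun i j => if p i = j then dB ε i else 0

lemma spMat_mulVec (p : Equiv.Perm (Fin 4)) (ε : Fin 4 → Bool) (v : V4) :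
    Matrix.mulVec (spMat p ε) v = fun i => dB ε i * v (p i) := by
  funext i
  show ∑ j, (if p i = j then dB ε i else 0) * v j = dB ε i * v (p i)
  rw [Finset.sum_eq_single (p i)]
  · simp
  · intro j _ hj
    simp [Ne.symm hj, fun h : p i = j => hj h.symm]
  · intro h
    exact absurd (Finset.mem_univ _) h

lemma dB_sq (ε : Fin 4 → Bool) (i : Fin 4) : dB ε i * dB ε i = 1 := by
  unfold dB
  by_cases h : ε i <;> simp [h]

lemma spMat_orth (p : Equiv.Perm (Fin 4)) (ε : Fin 4 → Bool) :
    spMat p ε ∈ Matrix.orthogonalGroup (Fin 4) ℝ := by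
  rw [Matrix.mem_orthogonalGroup_iff]
  apply Matrix.ext
  intro i j
  have hstar : star (spMat p ε) = (spMat p ε).transpose := by
    rw [Matrix.star_eq_conjTranspose]
    apply Matrix.ext
    intro a b
    simp [Matrix.conjTranspose_apply]
  show ∑ k, spMat p ε i k * (spMat p ε).transpose k j = (1 : Matrix (Fin 4) (Fin 4) ℝ) i j
  have hterm : ∀ k, spMat p ε i k * (spMat p ε).transpose k j
      = if p i = k then (if p j = k then dB ε i * dB ε j else 0) else 0 := by
    intro k
    show (if p i = k then dB ε i else 0) * (if p j = k then dB ε j else 0) = _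
    by_cases h1 : p i = k <;> by_cases h2 : p j = k <;> simp [h1, h2]
  rw [Finset.sum_congr rfl (fun k _ => hterm k), Finset.sum_ite_eq _ (p i)]
  simp only [Finset.mem_univ, if_true]
  by_cases hij : i = j
  · subst hij
    simp [dB_sq, Matrix.one_apply]
  · have : p j ≠ p i := fun h => hij (p.injective h.symm)
    simp [this, Matrix.one_apply, hij]

lemma toC_actBB (p : Equiv.Perm (Fin 4)) (ε : Fin 4 → Bool) (b : BV) :
    Matrix.mulVec (spMat p ε) (toC b : V4) = (toC (actBB p ε b) : V4) := by
  rw [spMat_mulVec]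
  funext i
  show dB ε i * (if b (p i) then 1 else -1) = if (ε i).xor (b (p i)) then 1 else -1
  unfold dB
  by_cases h1 : ε i <;> by_cases h2 : b (p i) <;> simp [h1, h2] <;> norm_num

def ainvB (p : Equiv.Perm (Fin 4)) (ε : Fin 4 → Bool) (c : BV) : BV :=
  fun j => (ε (p.symm j)).xor (c (p.symm j))

lemma actBB_ainvB (p : Equiv.Perm (Fin 4)) (ε : Fin 4 → Bool) (c : BV) :
    actBB p ε (ainvB p ε c) = c := by
  funext i
  show (ε i).xor ((ε (p.symm (p i))).xor (c (p.symm (p i)))) = c i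
  rw [Equiv.symm_apply_apply]
  cases h1 : ε i <;> cases h2 : c i <;> rfl

lemma spMat_mem_bigG (p : Equiv.Perm (Fin 4)) (ε : Fin 4 → Bool) :
    Matrix.mulVec (spMat p ε) '' cubeSet = cubeSet := by
  ext v
  constructor
  · rintro ⟨w, hw, rfl⟩
    obtain ⟨b, hb⟩ := toC_surj ⟨w, hw⟩
    have hbv : (toC b : V4) = w := congrArg Subtype.val hb
    rw [← hbv, toC_actBB]
    exact (toC (actBB p ε b)).2
  · intro hv
    obtain ⟨b, hb⟩ := toC_surj ⟨v, hv⟩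
    have hbv : (toC b : V4) = v := congrArg Subtype.val hb
    refine ⟨(toC (ainvB p ε b) : V4), (toC (ainvB p ε b)).2, ?_⟩
    rw [toC_actBB, actBB_ainvB, hbv]

def spG (p : Equiv.Perm (Fin 4)) (ε : Fin 4 → Bool) : bigG :=
  ⟨⟨spMat p ε, spMat_orth p ε⟩, spMat_mem_bigG p ε⟩

lemma matOf_spG (p : Equiv.Perm (Fin 4)) (ε : Fin 4 → Bool) : matOf (spG p ε) = spMat p ε := rfl

lemma spMat_det (p : Equiv.Perm (Fin 4)) (ε : Fin 4 → Bool)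
    (h : ((Equiv.Perm.sign p : ℤ) * ∏ i, (if ε i then (-1:ℤ) else 1)) = 1) :
    (spMat p ε).det = 1 := by
  have hfac : spMat p ε = Matrix.diagonal (dB ε) * Equiv.Perm.permMatrix ℝ p := by
    apply Matrix.ext
    intro i j
    rw [Matrix.diagonal_mul]
    show (if p i = j then dB ε i else 0) = dB ε i * Equiv.Perm.permMatrix ℝ p i j
    unfold Equiv.Perm.permMatrix PEquiv.toMatrix
    simp only [Matrix.of_apply, Equiv.toPEquiv_apply, Option.mem_def, Option.some.injEq]
    by_cases hij : p i = j
    · simp [hij]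
    · simp [hij, fun hh : j = p i => hij hh.symm]
  rw [hfac, Matrix.det_mul, Matrix.det_diagonal, Matrix.det_permutation]
  have hprod : (∏ i, dB ε i) = ((∏ i, (if ε i then (-1:ℤ) else 1) : ℤ) : ℝ) := by
    rw [Int.cast_prod]
    apply Finset.prod_congr rfl
    intro i _
    unfold dB
    by_cases h1 : ε i <;> simp [h1]
  rw [hprod]
  have hsign : ((Equiv.Perm.sign p : ℤ) : ℝ) = ((Equiv.Perm.sign p : ℤˣ) : ℝ) := by
    rcases Int.units_eq_one_or (Equiv.Perm.sign p) with hu | hu <;> rw [hu] <;> norm_num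
  rw [← hsign]
  rw [mul_comm]
  exact_mod_cast h

-- negG powers and DetOne
lemma negG_sq : negG * negG = 1 := by
  apply Subtype.ext
  apply Subtype.ext
  show (-1 : Matrix (Fin 4) (Fin 4) ℝ) * (-1) = 1
  simp

lemma zpowers_negG (z : bigG) (hz : z ∈ Subgroup.zpowers negG) : z = 1 ∨ z = negG := by
  rcases Subgroup.mem_zpowers_iff.mp hz with ⟨k, rfl⟩
  have h2 : negG ^ (2:ℤ) = 1 := by
    rw [show (2:ℤ) = ((2:ℕ):ℤ) by norm_num, zpow_natCast, pow_two]
    exact negG_sq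
  rcases Int.even_or_odd k with ⟨m, hm⟩ | ⟨m, hm⟩
  · left
    have hm' : k = 2 * m := by omega
    rw [hm', zpow_mul, h2, one_zpow]
  · right
    rw [hm, zpow_add, zpow_mul, h2, one_zpow, one_mul, zpow_one]

lemma matOf_negG : matOf negG = -1 := rfl

lemma det_matOf_negG : (matOf negG).det = 1 := by
  rw [matOf_negG]
  have : (-1 : Matrix (Fin 4) (Fin 4) ℝ) = -(1 : Matrix (Fin 4) (Fin 4) ℝ) := by simp
  rw [this, Matrix.det_neg]
  norm_num

lemma detOne_mk (A : bigG) (h : (matOf A).det = 1) : DetOne (QuotientGroup.mk A) := by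
  intro A' hA'
  have hz : A'⁻¹ * A ∈ Subgroup.zpowers negG := by
    rw [← QuotientGroup.eq]
    exact hA'
  have hA : A = A' * (A'⁻¹ * A) := by group
  rcases zpowers_negG _ hz with hzz | hzz
  · rw [hzz, mul_one] at hA
    rw [← hA]; exact h
  · rw [hzz] at hA
    have : matOf A = matOf A' * matOf negG := by rw [hA]; rfl
    have hdet := congrArg Matrix.det this
    rw [Matrix.det_mul, det_matOf_negG, mul_one] at hdet
    rw [← hdet]; exact h


def sf12 (i : Fin 4) : Fin 4 := if i = 1 then 2 else if i = 2 then 1 else i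
def ps12 : Equiv.Perm (Fin 4) := ⟨sf12, sf12, by decide, by decide⟩
def sf23 (i : Fin 4) : Fin 4 := if i = 2 then 3 else if i = 3 then 2 else i
def ps23 : Equiv.Perm (Fin 4) := ⟨sf23, sf23, by decide, by decide⟩
def sf13 (i : Fin 4) : Fin 4 := if i = 1 then 3 else if i = 3 then 1 else i
def ps13 : Equiv.Perm (Fin 4) := ⟨sf13, sf13, by decide, by decide⟩

lemma swapF_eq (c c' k : Fin 4) : Equiv.swap c c' k = swapF c c' k := by
  rw [Equiv.swap_apply_def]; rfl

set_option maxHeartbeats 1000000 in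
lemma DEC (L : Bool) (c c' : Fin 4) (hne : c ≠ c') :
    ∃ (p : Equiv.Perm (Fin 4)) (ε : Fin 4 → Bool),
      ((Equiv.Perm.sign p : ℤ) * ∏ i, (if ε i then (-1:ℤ) else 1)) = 1 ∧
      ∀ (b : BV) (i k : Fin 4), qcB L k (eclB b i) = i →
        qcB L (swapF c c' k) (eclB (actBB p ε b) (p.symm i)) = p.symm i := by
  cases L <;> fin_cases c <;> fin_cases c'
  · exact absurd rfl hne
  · exact ⟨ps12, ![false,false,false,true], by decide, by decide⟩
  · exact ⟨ps23, ![false,true,false,false], by decide, by decide⟩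
  · exact ⟨ps13, ![false,false,true,false], by decide, by decide⟩
  · exact ⟨ps12, ![false,false,false,true], by decide, by decide⟩
  · exact absurd rfl hne
  · exact ⟨ps13, ![false,true,true,true], by decide, by decide⟩
  · exact ⟨ps23, ![false,true,true,true], by decide, by decide⟩
  · exact ⟨ps23, ![false,true,false,false], by decide, by decide⟩
  · exact ⟨ps13, ![false,true,true,true], by decide, by decide⟩
  · exact absurd rfl hne
  · exact ⟨ps12, ![false,true,true,true], by decide, by decide⟩
  · exact ⟨ps13, ![false,false,true,false], by decide, by decide⟩
  · exact ⟨ps23, ![false,true,true,true], by decide, by decide⟩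
  · exact ⟨ps12, ![false,true,true,true], by decide, by decide⟩
  · exact absurd rfl hne
  · exact absurd rfl hne
  · exact ⟨ps13, ![false,false,true,false], by decide, by decide⟩
  · exact ⟨ps12, ![false,false,false,true], by decide, by decide⟩
  · exact ⟨ps23, ![false,true,false,false], by decide, by decide⟩
  · exact ⟨ps13, ![false,false,true,false], by decide, by decide⟩
  · exact absurd rfl hne
  · exact ⟨ps23, ![false,true,true,true], by decide, by decide⟩
  · exact ⟨ps12, ![false,true,true,true], by decide, by decide⟩
  · exact ⟨ps12, ![false,false,false,true], by decide, by decide⟩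
  · exact ⟨ps23, ![false,true,true,true], by decide, by decide⟩
  · exact absurd rfl hne
  · exact ⟨ps13, ![false,true,true,true], by decide, by decide⟩
  · exact ⟨ps23, ![false,true,false,false], by decide, by decide⟩
  · exact ⟨ps12, ![false,true,true,true], by decide, by decide⟩
  · exact ⟨ps13, ![false,true,true,true], by decide, by decide⟩
  · exact absurd rfl hne


lemma dec_classify : ∀ q0 : Fin 4 → Fin 4, Function.Injective q0 →
    (∀ u u', oTB u (q0 u) = oTB u' (q0 u') → u = u') → ∃ L c, q0 = qcB L c := by
  set_option maxRecDepth 10000 in decide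

lemma dec_sameL : ∀ (L : Bool) (c : Fin 4) (L' : Bool) (c' : Fin 4),
    (∀ u, qcB L c u ≠ qcB L' c' u) → L = L' := by decide

lemma edg_even_eq (u u' i i' : Fin 4) (h : edgB (evB u) i = edgB (evB u') i') : u = u' := by
  unfold edgB at h
  rw [Sym2.eq_iff] at h
  rcases h with ⟨h1, -⟩ | ⟨h1, -⟩
  · rcases (vB_eq_iff _ _).mp h1 with h2 | h2
    · exact (dec_ev_inj u' u h2).symm
    · exact absurd h2 (dec_ev_ne_bnot u' u)
  · have hp := vB_pb _ _ h1
    rw [dec_pb_ev, dec_pb_flip, dec_pb_ev] at hp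
    simp at hp

lemma actBB_flip (p : Equiv.Perm (Fin 4)) (ε : Fin 4 → Bool) (b : BV) (i : Fin 4) :
    actBB p ε (flipB i b) = flipB (p.symm i) (actBB p ε b) := by
  funext j
  simp only [flipB, actBB]
  by_cases hj : p j = i
  · have hj' : j = p.symm i := by rw [← hj, Equiv.symm_apply_apply]
    rw [if_pos hj, if_pos hj']
    cases hε : ε j <;> cases hb : b (p j) <;> rfl
  · have hj' : j ≠ p.symm i := fun hh => hj (by rw [hh, Equiv.apply_symm_apply])
    rw [if_neg hj, if_neg hj']

lemma giso_vB (p : Equiv.Perm (Fin 4)) (ε : Fin 4 → Bool) (b : BV) :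
    giso (spG p ε) (vB b) = vB (actBB p ε b) := by
  show hmap (spG p ε) (⟦toC b⟧ : HVert) = (⟦toC (actBB p ε b)⟧ : HVert)
  rw [hmap_mk]
  congr 1
  apply Subtype.ext
  show Matrix.mulVec (matOf (spG p ε)) (toC b : V4) = (toC (actBB p ε b) : V4)
  rw [matOf_spG, toC_actBB]

lemma fQG_edg (p : Equiv.Perm (Fin 4)) (ε : Fin 4 → Bool) (b : BV) (i : Fin 4) :
    Sym2.map ⇑(fQG (QuotientGroup.mk (spG p ε))) (edgB b i)
      = edgB (actBB p ε b) (p.symm i) := by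
  rw [fQG_mk]
  show Sym2.map ⇑(giso (spG p ε)) s(vB b, vB (flipB i b)) = _
  rw [Sym2.map_pair_eq]
  unfold edgB
  rw [giso_vB, giso_vB, actBB_flip]



end Stmt18

open Stmt18

/-- for a chiral partition `{M k}` of `H`, the action of
`Γ = {[A] ∈ G/{±I} : det A = 1}` on the four matchings is surjective onto the
symmetric group on the parts: every permutation of the four matchings is induced by
some element of `Γ`. -/
theorem stmt_18 :
    ∀ M : Fin 4 → Set (Sym2 HVert), IsChiralPartition M →
      ∃ f : QG →* (H ≃g H), IsNaturalAction f ∧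
        ∀ σ : Equiv.Perm (Fin 4), ∃ x : QG, DetOne x ∧
          ∀ k : Fin 4, Sym2.map ⇑(f x) '' M k = M (σ k) := by
  intro M hM
  obtain ⟨hPM, hPart, hDir⟩ := hM
  refine ⟨fQG, fQG_natural, ?_⟩
  classical
  let colE : Sym2 HVert → Fin 4 := fun e => if h : ∃ k, e ∈ M k then h.choose else 0
  have colE_spec : ∀ e, e ∈ H.edgeSet → ∀ k, (e ∈ M k ↔ colE e = k) := by
    intro e he k
    obtain ⟨k0, hk0, huniq⟩ := hPart e he
    have hex : ∃ k, e ∈ M k := ⟨k0, hk0⟩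
    have hchoose : e ∈ M (colE e) := by
      show e ∈ M (if h : ∃ k, e ∈ M k then h.choose else 0)
      rw [dif_pos hex]
      exact hex.choose_spec
    constructor
    · intro hm
      rw [huniq k hm, huniq (colE e) hchoose]
    · intro hh
      rw [← hh]
      exact hchoose
  let colB : BV → Fin 4 → Fin 4 := fun b i => colE (edgB b i)
  have colB_iff : ∀ b i k, (edgB b i ∈ M k ↔ colB b i = k) := fun b i k =>
    colE_spec _ (edg_mem_edgeSet b i) k
  have colB_mem : ∀ b i, edgB b i ∈ M (colB b i) := fun b i =>
    (colB_iff b i _).mpr rfl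
  have uniq_vert : ∀ k (e e' : Sym2 HVert), e ∈ M k → e' ∈ M k →
      ∀ x, x ∈ e → x ∈ e' → e = e' := by
    intro k e e' he he' x hx hx'
    obtain ⟨e0, -, hu⟩ := (hPM k).2 x
    rw [hu e ⟨he, hx⟩, hu e' ⟨he', hx'⟩]
  have rowinj : ∀ b, Function.Injective (colB b) := by
    intro b i i' h
    exact edg_inj_i b i i'
      (uniq_vert (colB b i') _ _ (h ▸ colB_mem b i) (colB_mem b i') (vB b)
        (Sym2.mem_mk_left _ _) (Sym2.mem_mk_left _ _))
  have rowbij : ∀ b, Function.Bijective (colB b) :=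
    fun b => Finite.injective_iff_bijective.mp (rowinj b)
  let q : Fin 4 → Fin 4 → Fin 4 := fun k u => (Equiv.ofBijective _ (rowbij (evB u))).symm k
  have q_spec : ∀ k u, colB (evB u) (q k u) = k := by
    intro k u
    show colB (evB u) ((Equiv.ofBijective _ (rowbij (evB u))).symm k) = k
    exact (Equiv.ofBijective _ (rowbij (evB u))).apply_symm_apply k
  have q_uniq : ∀ k u i, colB (evB u) i = k → q k u = i := by
    intro k u i h
    apply rowinj (evB u)
    rw [q_spec k u, h]
  have q_inj_u : ∀ k, Function.Injective (fun u => q k u) := by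
    intro k u u' h
    simp only at h
    obtain ⟨e0, he0, hu⟩ := hDir k (q k u')
    have h1 : edgB (evB u) (q k u') ∈ M k := by
      rw [colB_iff, ← h]
      exact q_spec k u
    have h2 : edgB (evB u') (q k u') ∈ M k := by
      rw [colB_iff]; exact q_spec k u'
    have heq := (hu _ ⟨h1, edg_mem_D _ _⟩).trans (hu _ ⟨h2, edg_mem_D _ _⟩).symm
    exact edg_even_eq _ _ _ _ heq
  have q_odd_inj : ∀ k u u', oTB u (q k u) = oTB u' (q k u') → u = u' := by
    intro k u u' hot
    have hp1 : pB (flipB (q k u) (evB u)) = true := by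
      rw [dec_pb_flip, dec_pb_ev]; rfl
    have hp2 : pB (flipB (q k u') (evB u')) = true := by
      rw [dec_pb_flip, dec_pb_ev]; rfl
    have hcl := (dec_ocl _ _ hp1 hp2).mp hot
    have hv : vB (flipB (q k u) (evB u)) = vB (flipB (q k u') (evB u')) := by
      rw [vB_eq_iff]
      exact hcl
    have h1 : edgB (evB u) (q k u) ∈ M k := by rw [colB_iff]; exact q_spec k u
    have h2 : edgB (evB u') (q k u') ∈ M k := by rw [colB_iff]; exact q_spec k u'
    have heq : edgB (evB u) (q k u) = edgB (evB u') (q k u') := by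
      apply uniq_vert k _ _ h1 h2 (vB (flipB (q k u) (evB u)))
      · exact Sym2.mem_mk_right _ _
      · rw [hv]; exact Sym2.mem_mk_right _ _
    exact edg_even_eq _ _ _ _ heq
  have hclass : ∀ k, ∃ L c, (fun u => q k u) = qcB L c := fun k =>
    dec_classify _ (q_inj_u k) (q_odd_inj k)
  choose Lf cf hLc using hclass
  have q_ne : ∀ k k' u, k ≠ k' → q k u ≠ q k' u := by
    intro k k' u hkk h
    apply hkk
    rw [← q_spec k u, ← q_spec k' u, h]
  have hLL : ∀ k, Lf k = Lf 0 := by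
    intro k
    by_cases hk : k = 0
    · rw [hk]
    · apply dec_sameL (Lf k) (cf k) (Lf 0) (cf 0)
      intro u
      rw [← congrFun (hLc k) u, ← congrFun (hLc 0) u]
      exact q_ne k 0 u hk
  have hq_eq : ∀ k u, q k u = qcB (Lf 0) (cf k) u := by
    intro k u
    have h := congrFun (hLc k) u
    rw [hLL k] at h
    exact h
  have cf_inj : Function.Injective cf := by
    intro k k' h
    by_contra hkk
    apply q_ne k k' 0 hkk
    rw [hq_eq, hq_eq, h]
  have cf_bij := Finite.injective_iff_bijective.mp cf_inj
  let hE : Equiv.Perm (Fin 4) := Equiv.ofBijective cf cf_bij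
  have BR : ∀ b i k, (colB b i = k ↔ qcB (Lf 0) (cf k) (eclB b i) = i) := by
    intro b i k
    have h1 : colB b i = colB (evB (eclB b i)) i := by
      show colE (edgB b i) = colE (edgB (evB (eclB b i)) i)
      rw [edg_ev_ecl]
    rw [h1]
    constructor
    · intro h
      rw [← hq_eq]
      exact q_uniq k _ i h
    · intro h
      rw [← hq_eq] at h
      have h2 := q_spec k (eclB b i)
      rwa [h] at h2
  have swap_real : ∀ i j : Fin 4, i ≠ j → ∃ x : QG, DetOne x ∧
      ∀ k, Sym2.map ⇑(fQG x) '' M k = M (Equiv.swap i j k) := by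
    intro i j hij
    have hcc : cf i ≠ cf j := fun h => hij (cf_inj h)
    obtain ⟨p, ε, hdet, hcc2⟩ := DEC (Lf 0) (cf i) (cf j) hcc
    refine ⟨QuotientGroup.mk (spG p ε), detOne_mk _ (spMat_det p ε hdet), ?_⟩
    have CC : ∀ b i0, colB (actBB p ε b) (p.symm i0) = Equiv.swap i j (colB b i0) := by
      intro b i0
      have h1 : qcB (Lf 0) (cf (colB b i0)) (eclB b i0) = i0 := (BR b i0 _).mp rfl
      have h2 := hcc2 b i0 (cf (colB b i0)) h1
      have h3 : swapF (cf i) (cf j) (cf (colB b i0)) = cf (Equiv.swap i j (colB b i0)) := by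
        have h4 := Equiv.swap_apply_apply hE i j
        calc swapF (cf i) (cf j) (cf (colB b i0))
            = Equiv.swap (hE i) (hE j) (hE (colB b i0)) := by rw [swapF_eq]; rfl
          _ = (hE * Equiv.swap i j * hE⁻¹) (hE (colB b i0)) := by rw [h4]
          _ = hE (Equiv.swap i j (colB b i0)) := by
              simp [Equiv.Perm.mul_apply]
          _ = cf (Equiv.swap i j (colB b i0)) := rfl
      rw [h3] at h2
      exact (BR _ _ _).mpr h2
    intro k
    ext e
    constructor
    · rintro ⟨e', he', rfl⟩
      have he'E : e' ∈ H.edgeSet := (hPM k).1 he'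
      obtain ⟨b, i0, rfl⟩ := edg_surj e' he'E
      have hk : colB b i0 = k := (colB_iff b i0 k).mp he'
      rw [fQG_edg]
      apply (colB_iff _ _ _).mpr
      rw [CC b i0, hk]
    · intro he
      have heE : e ∈ H.edgeSet := (hPM (Equiv.swap i j k)).1 he
      obtain ⟨b', i', rfl⟩ := edg_surj e heE
      have hsk : colB b' i' = Equiv.swap i j k := (colB_iff _ _ _).mp he
      refine ⟨edgB (ainvB p ε b') (p i'), ?_, ?_⟩
      · apply (colB_iff _ _ _).mpr
        have hC := CC (ainvB p ε b') (p i')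
        rw [actBB_ainvB, Equiv.symm_apply_apply, hsk] at hC
        exact ((Equiv.swap i j).injective hC).symm
      · rw [fQG_edg, actBB_ainvB, Equiv.symm_apply_apply]
  have detOne_mul : ∀ x y : QG, DetOne x → DetOne y → DetOne (x * y) := by
    intro x y hx hy
    obtain ⟨A, rfl⟩ := QuotientGroup.mk_surjective x
    obtain ⟨B, rfl⟩ := QuotientGroup.mk_surjective y
    rw [← QuotientGroup.mk_mul]
    apply detOne_mk
    rw [matOf_mul, Matrix.det_mul, hx A rfl, hy B rfl, mul_one]
  intro σ
  refine Equiv.Perm.swap_induction_on σ ?_ ?_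
  · refine ⟨1, ?_, ?_⟩
    · have h1 : (1 : QG) = QuotientGroup.mk (1 : bigG) := rfl
      rw [h1]
      apply detOne_mk
      rw [matOf_one, Matrix.det_one]
    · intro k
      rw [map_one fQG]
      have h2 : ⇑(1 : H ≃g H) = id := rfl
      rw [h2, Sym2.map_id, Set.image_id]
      rfl
  · intro p x y hxy ih
    obtain ⟨x2, hd2, hi2⟩ := ih
    obtain ⟨x1, hd1, hi1⟩ := swap_real x y hxy
    refine ⟨x1 * x2, detOne_mul x1 x2 hd1 hd2, ?_⟩
    intro k
    rw [map_mul fQG, RelIso.coe_mul, Sym2.map_comp, Set.image_comp, hi2, hi1]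
    rfl
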